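/- Let r ≤ n and let C be an r × r × n partial latin box on symbol set [n]. Let V ⊆ [n] with |V| = n − r, and let U ⊆ [r] × [r] be such that for every i ∈ [r], exactly n − r pairs of U have first coordinate i and exactly n − r pairs of U have second coordinate i. Suppose: for all (i,j) ∈ U, the cells (i,j,k) with k ≤ r are filled with symbols from [n] \ V and the cells (i,j,k) with k > r are empty; all cells (i,j,k) with (i,j) ∉ U are filled; no cell (i,j,k) with k > r contains a symbol from V; and each symbol occurs at most once in every line of the filled cells. Then the empty cells can be filled with symbols from V so that the resulting r × r × n array has each symbol at most once in every line. -/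

import Mathlib

/-- A partial latin box: each symbol occurs at most once in every line
among the filled cells. -/
def IsPartialLatinBox {r s t n : ℕ}
    (C : Fin r → Fin s → Fin t → Option (Fin n)) : Prop :=
  (∀ i j k₁ k₂ x, C i j k₁ = some x → C i j k₂ = some x → k₁ = k₂) ∧
  (∀ i j₁ j₂ k x, C i j₁ k = some x → C i j₂ k = some x → j₁ = j₂) ∧
  (∀ i₁ i₂ j k x, C i₁ j k = some x → C i₂ j k = some x → i₁ = i₂)

/-- A latin box: each symbol occurs at most once in every line. -/
def IsLatinBox {r s t n : ℕ} (D : Fin r → Fin s → Fin t → Fin n) : Prop :=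
  (∀ i j, Function.Injective fun k => D i j k) ∧
  (∀ i k, Function.Injective fun j => D i j k) ∧
  (∀ j k, Function.Injective fun i => D i j k)

lemma exists_decomp {r : ℕ} : ∀ (d : ℕ) (U : Finset (Fin r × Fin r)),
    (∀ i, (U.filter fun p => p.1 = i).card = d) →
    (∀ i, (U.filter fun p => p.2 = i).card = d) →
    ∃ σ : Fin d → (Fin r ≃ Fin r),
      (∀ p : Fin r × Fin r, p ∈ U ↔ ∃ m, σ m p.1 = p.2) ∧
      (∀ m m' i, σ m i = σ m' i → m = m') := by
  intro d
  induction d with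
  | zero =>
    intro U h1 h2
    refine ⟨Fin.elim0, fun p => ⟨fun hp => ?_, fun ⟨m, _⟩ => m.elim0⟩, fun m => m.elim0⟩
    have hmem : p ∈ U.filter fun q => q.1 = p.1 := by simp [hp]
    rw [Finset.card_eq_zero.mp (h1 p.1)] at hmem
    exact absurd hmem (Finset.notMem_empty p)
  | succ d ih =>
    intro U h1 h2
    classical
    set t : Fin r → Finset (Fin r) := fun i => (U.filter fun p => p.1 = i).image Prod.snd
      with ht
    have hall : ∀ A : Finset (Fin r), A.card ≤ (A.biUnion t).card := by
      intro A
      have hdisj : ∀ x ∈ A, ∀ y ∈ A, x ≠ y →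
          Disjoint (U.filter fun p => p.1 = x) (U.filter fun p => p.1 = y) := by
        intro x _ y _ hxy
        simp only [Finset.disjoint_left, Finset.mem_filter]
        rintro p ⟨_, rfl⟩ ⟨_, h⟩
        exact hxy h
      have e1 : (A.biUnion fun i => U.filter fun p => p.1 = i).card = (d+1) * A.card := by
        rw [Finset.card_biUnion hdisj]
        simp [h1, mul_comm]
      have hsub : (A.biUnion fun i => U.filter fun p => p.1 = i) ⊆
          (A.biUnion t).biUnion fun j => U.filter fun p => p.2 = j := by
        intro p hp
        simp only [Finset.mem_biUnion, Finset.mem_filter] at hp ⊢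
        obtain ⟨i, hi, hpU, hpi⟩ := hp
        refine ⟨p.2, ⟨i, hi, ?_⟩, hpU, rfl⟩
        simp only [ht, Finset.mem_image, Finset.mem_filter]
        exact ⟨p, ⟨hpU, hpi⟩, rfl⟩
      have e2 : ((A.biUnion t).biUnion fun j => U.filter fun p => p.2 = j).card ≤
          (d+1) * (A.biUnion t).card := by
        refine le_trans (Finset.card_biUnion_le) ?_
        rw [Finset.sum_congr rfl fun j _ => h2 j, Finset.sum_const, smul_eq_mul, mul_comm]
      have := le_trans (le_of_eq e1.symm) (le_trans (Finset.card_le_card hsub) e2)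
      exact Nat.le_of_mul_le_mul_left this (Nat.succ_pos d)
    obtain ⟨f, hfinj, hft⟩ := (Finset.all_card_le_biUnion_card_iff_exists_injective t).mp hall
    have hfbij : Function.Bijective f := Finite.injective_iff_bijective.mp hfinj
    set e : Fin r ≃ Fin r := Equiv.ofBijective f hfbij with he
    have heapp : ∀ i, e i = f i := fun i => rfl
    have heU : ∀ i, (i, f i) ∈ U := by
      intro i
      have := hft i
      simp only [ht, Finset.mem_image, Finset.mem_filter] at this
      obtain ⟨p, ⟨hpU, hp1⟩, hp2⟩ := this
      have : p = (i, f i) := Prod.ext hp1 hp2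
      rwa [this] at hpU
    set U' : Finset (Fin r × Fin r) := U.filter fun p => p.2 ≠ f p.1 with hU'
    have hrow : ∀ i, (U'.filter fun p => p.1 = i).card = d := by
      intro i
      have hset : (U'.filter fun p => p.1 = i) =
          (U.filter fun p => p.1 = i).erase (i, f i) := by
        ext p
        simp only [hU', Finset.mem_filter, Finset.mem_erase, Finset.filter_filter]
        constructor
        · rintro ⟨hpU, hne, hp1⟩
          exact ⟨fun h => hne (by rw [h]), hpU, hp1⟩
        · rintro ⟨hne, hpU, hp1⟩
          refine ⟨hpU, fun h => hne ?_, hp1⟩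
          rw [show p = (i, f i) from Prod.ext hp1 (by rw [h, hp1])]
      rw [hset, Finset.card_erase_of_mem (by simp [heU i]), h1]
      simp
    have hcol : ∀ j, (U'.filter fun p => p.2 = j).card = d := by
      intro j
      have hset : (U'.filter fun p => p.2 = j) =
          (U.filter fun p => p.2 = j).erase (e.symm j, j) := by
        ext p
        simp only [hU', Finset.mem_filter, Finset.mem_erase, Finset.filter_filter]
        constructor
        · rintro ⟨hpU, hne, hp2⟩
          refine ⟨fun h => hne ?_, hpU, hp2⟩
          rw [h]
          show j = f (e.symm j)
          rw [← heapp, Equiv.apply_symm_apply]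
        · rintro ⟨hne, hpU, hp2⟩
          refine ⟨hpU, fun h => hne ?_, hp2⟩
          have h1 : p.1 = e.symm j := by
            rw [Equiv.eq_symm_apply, heapp, ← h, hp2]
          exact Prod.ext h1 hp2
      rw [hset, Finset.card_erase_of_mem, h2]
      · simp
      · have := heU (e.symm j)
        rw [show f (e.symm j) = j from by rw [← heapp, Equiv.apply_symm_apply]] at this
        simp [this]
    obtain ⟨σ', hσ'1, hσ'2⟩ := ih U' hrow hcol
    refine ⟨Fin.cons e σ', ?_, ?_⟩
    · intro p
      constructor
      · intro hp
        by_cases hp2 : p.2 = f p.1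
        · exact ⟨0, by rw [Fin.cons_zero, heapp, hp2]⟩
        · have : p ∈ U' := by simp [hU', hp, hp2]
          obtain ⟨m, hm⟩ := (hσ'1 p).mp this
          exact ⟨m.succ, by rwa [Fin.cons_succ]⟩
      · rintro ⟨m, hm⟩
        induction m using Fin.cases with
        | zero =>
          rw [Fin.cons_zero, heapp] at hm
          have := heU p.1
          rw [hm] at this
          simpa using this
        | succ m =>
          rw [Fin.cons_succ] at hm
          have : p ∈ U' := (hσ'1 p).mpr ⟨m, hm⟩
          exact Finset.mem_of_mem_filter p this
    · intro m m' i h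
      induction m using Fin.cases with
      | zero =>
        induction m' using Fin.cases with
        | zero => rfl
        | succ m' =>
          rw [Fin.cons_zero, Fin.cons_succ] at h
          have : (i, σ' m' i) ∈ U' := (hσ'1 (i, σ' m' i)).mpr ⟨m', rfl⟩
          simp only [hU', Finset.mem_filter] at this
          exact absurd (by rw [← heapp, ← h]) this.2
      | succ m =>
        induction m' using Fin.cases with
        | zero =>
          rw [Fin.cons_zero, Fin.cons_succ] at h
          have : (i, σ' m i) ∈ U' := (hσ'1 (i, σ' m i)).mpr ⟨m, rfl⟩
          simp only [hU', Finset.mem_filter] at this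
          exact absurd (by rw [← heapp, h]) this.2
        | succ m' =>
          rw [Fin.cons_succ, Fin.cons_succ] at h
          rw [hσ'2 m m' i h]

/-- completing the back entries of an r × r × n partial latin box. -/
theorem fill_back_entries (n r : ℕ) (hr : r ≤ n)
    (C : Fin r → Fin r → Fin n → Option (Fin n))
    (hC : IsPartialLatinBox C)
    (U : Finset (Fin r × Fin r)) (V : Finset (Fin n)) (hV : V.card = n - r)
    (hU1 : ∀ i : Fin r, (U.filter fun p => p.1 = i).card = n - r)
    (hU2 : ∀ i : Fin r, (U.filter fun p => p.2 = i).card = n - r)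
    (hUfill : ∀ p ∈ U, ∀ k : Fin n, (k : ℕ) < r →
      ∃ x : Fin n, x ∉ V ∧ C p.1 p.2 k = some x)
    (hUempty : ∀ p ∈ U, ∀ k : Fin n, r ≤ (k : ℕ) → C p.1 p.2 k = none)
    (hfill : ∀ p : Fin r × Fin r, p ∉ U → ∀ k : Fin n, (C p.1 p.2 k).isSome)
    (hnoV : ∀ (i j : Fin r) (k : Fin n), r ≤ (k : ℕ) → ∀ x ∈ V, C i j k ≠ some x) :
    ∃ D : Fin r → Fin r → Fin n → Fin n, IsLatinBox D ∧
      (∀ i j k x, C i j k = some x → D i j k = x) ∧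
      (∀ i j k, C i j k = none → D i j k ∈ V) := by
  classical
  obtain ⟨σ, hσ, hσinj⟩ := exists_decomp (n - r) U hU1 hU2
  set emb : Fin (n - r) → Fin n := fun l => (V.orderIsoOfFin hV l : Fin n) with hembdef
  have hembinj : Function.Injective emb :=
    fun a b h => (V.orderIsoOfFin hV).injective (Subtype.ext h)
  have hembV : ∀ l, emb l ∈ V := fun l => (V.orderIsoOfFin hV l).2
  set fill : Fin r → Fin r → Fin n → Fin n := fun i j k =>
    if h : ∃ m : Fin (n - r), σ m i = j then
      emb ⟨((k : ℕ) - r + (h.choose : ℕ)) % (n - r), Nat.mod_lt _ h.choose.pos⟩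
    else k with hfilldef
  have hfillval : ∀ (i j : Fin r) (k : Fin n) (h : ∃ m : Fin (n - r), σ m i = j),
      fill i j k = emb ⟨((k : ℕ) - r + (h.choose : ℕ)) % (n - r),
        Nat.mod_lt _ h.choose.pos⟩ := by
    intro i j k h
    simp only [hfilldef]
    exact dif_pos h
  -- characterization of empty cells
  have hnone : ∀ (i j : Fin r) (k : Fin n), C i j k = none ↔ ((i, j) ∈ U ∧ r ≤ (k : ℕ)) := by
    intro i j k
    constructor
    · intro h
      by_cases hu : (i, j) ∈ U
      · refine ⟨hu, ?_⟩
        by_contra hk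
        push_neg at hk
        obtain ⟨x, _, hx⟩ := hUfill (i, j) hu k hk
        rw [h] at hx
        exact Option.some_ne_none x hx.symm
      · have := hfill (i, j) hu k
        rw [h] at this
        simp at this
    · exact fun ⟨hu, hk⟩ => hUempty (i, j) hu k hk
  -- filled cells of U-pairs avoid V
  have hnotV : ∀ (i j : Fin r) (k : Fin n) (x : Fin n),
      (i, j) ∈ U → C i j k = some x → x ∉ V := by
    intro i j k x hu hx hxV
    by_cases hk : r ≤ (k : ℕ)
    · exact hnoV i j k hk x hxV hx
    · obtain ⟨y, hyV, hy⟩ := hUfill (i, j) hu k (by omega)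
      rw [hx] at hy
      exact hyV (Option.some.inj hy ▸ hxV)
  have cancel : ∀ a b c : ℕ, b < n - r → c < n - r →
      (a + b) % (n - r) = (a + c) % (n - r) → b = c := by
    intro a b c hb hc h
    have h' : b ≡ c [MOD n - r] := Nat.ModEq.add_left_cancel' a h
    rwa [Nat.ModEq, Nat.mod_eq_of_lt hb, Nat.mod_eq_of_lt hc] at h'
  have hkbound : ∀ k : Fin n, r ≤ (k : ℕ) → (k : ℕ) - r < n - r := by
    intro k hk
    have := k.isLt
    omega
  refine ⟨fun i j k => (C i j k).getD (fill i j k), ⟨?_, ?_, ?_⟩, ?_, ?_⟩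
  · -- injective in k
    intro i j k₁ k₂ hk
    simp only at hk
    rcases h1 : C i j k₁ with _ | x₁ <;> rcases h2 : C i j k₂ with _ | x₂ <;>
      rw [h1, h2] at hk <;> simp only [Option.getD_some, Option.getD_none] at hk
    · -- both empty
      obtain ⟨hu, hr1⟩ := (hnone i j k₁).mp h1
      obtain ⟨_, hr2⟩ := (hnone i j k₂).mp h2
      have hex : ∃ m : Fin (n - r), σ m i = j := (hσ (i, j)).mp hu
      rw [hfillval i j k₁ hex, hfillval i j k₂ hex] at hk
      have := Fin.mk.inj_iff.mp (hembinj hk)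
      have h12 : (k₁ : ℕ) - r = (k₂ : ℕ) - r := by
        refine cancel hex.choose ((k₁:ℕ) - r) ((k₂:ℕ) - r) (hkbound k₁ hr1) (hkbound k₂ hr2) ?_
        rw [Nat.add_comm (hex.choose : ℕ) ((k₁:ℕ) - r), Nat.add_comm (hex.choose : ℕ) ((k₂:ℕ) - r)]
        exact this
      exact Fin.ext (by omega)
    · -- k₁ empty, k₂ filled
      obtain ⟨hu, hr1⟩ := (hnone i j k₁).mp h1
      have hex : ∃ m : Fin (n - r), σ m i = j := (hσ (i, j)).mp hu
      rw [hfillval i j k₁ hex] at hk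
      exact absurd (hk ▸ hembV _) (hnotV i j k₂ x₂ hu h2)
    · -- k₁ filled, k₂ empty
      obtain ⟨hu, hr2⟩ := (hnone i j k₂).mp h2
      have hex : ∃ m : Fin (n - r), σ m i = j := (hσ (i, j)).mp hu
      rw [hfillval i j k₂ hex] at hk
      exact absurd (hk ▸ hembV _) (hnotV i j k₁ x₁ hu h1)
    · rw [hk] at h1
      exact hC.1 i j k₁ k₂ x₂ h1 h2
  · -- injective in j
    intro i k j₁ j₂ hk
    simp only at hk
    rcases h1 : C i j₁ k with _ | x₁ <;> rcases h2 : C i j₂ k with _ | x₂ <;>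
      rw [h1, h2] at hk <;> simp only [Option.getD_some, Option.getD_none] at hk
    · obtain ⟨hu1, hr1⟩ := (hnone i j₁ k).mp h1
      obtain ⟨hu2, _⟩ := (hnone i j₂ k).mp h2
      have hex1 : ∃ m : Fin (n - r), σ m i = j₁ := (hσ (i, j₁)).mp hu1
      have hex2 : ∃ m : Fin (n - r), σ m i = j₂ := (hσ (i, j₂)).mp hu2
      rw [hfillval i j₁ k hex1, hfillval i j₂ k hex2] at hk
      have := Fin.mk.inj_iff.mp (hembinj hk)
      have hm : (hex1.choose : ℕ) = (hex2.choose : ℕ) :=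
        cancel ((k:ℕ) - r) _ _ hex1.choose.isLt hex2.choose.isLt this
      rw [← hex1.choose_spec, ← hex2.choose_spec, Fin.ext hm]
    · obtain ⟨hu1, hr1⟩ := (hnone i j₁ k).mp h1
      have hex1 : ∃ m : Fin (n - r), σ m i = j₁ := (hσ (i, j₁)).mp hu1
      rw [hfillval i j₁ k hex1] at hk
      exact absurd h2 (hnoV i j₂ k hr1 x₂ (hk ▸ hembV _))
    · obtain ⟨hu2, hr2⟩ := (hnone i j₂ k).mp h2
      have hex2 : ∃ m : Fin (n - r), σ m i = j₂ := (hσ (i, j₂)).mp hu2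
      rw [hfillval i j₂ k hex2] at hk
      exact absurd h1 (hnoV i j₁ k hr2 x₁ (hk ▸ hembV _))
    · rw [hk] at h1
      exact hC.2.1 i j₁ j₂ k x₂ h1 h2
  · -- injective in i
    intro j k i₁ i₂ hk
    simp only at hk
    rcases h1 : C i₁ j k with _ | x₁ <;> rcases h2 : C i₂ j k with _ | x₂ <;>
      rw [h1, h2] at hk <;> simp only [Option.getD_some, Option.getD_none] at hk
    · obtain ⟨hu1, hr1⟩ := (hnone i₁ j k).mp h1
      obtain ⟨hu2, _⟩ := (hnone i₂ j k).mp h2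
      have hex1 : ∃ m : Fin (n - r), σ m i₁ = j := (hσ (i₁, j)).mp hu1
      have hex2 : ∃ m : Fin (n - r), σ m i₂ = j := (hσ (i₂, j)).mp hu2
      rw [hfillval i₁ j k hex1, hfillval i₂ j k hex2] at hk
      have := Fin.mk.inj_iff.mp (hembinj hk)
      have hm : hex1.choose = hex2.choose :=
        Fin.ext (cancel ((k:ℕ) - r) _ _ hex1.choose.isLt hex2.choose.isLt this)
      have : σ hex1.choose i₁ = σ hex1.choose i₂ := by
        rw [hex1.choose_spec, hm, hex2.choose_spec]
      exact (σ hex1.choose).injective this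
    · obtain ⟨hu1, hr1⟩ := (hnone i₁ j k).mp h1
      have hex1 : ∃ m : Fin (n - r), σ m i₁ = j := (hσ (i₁, j)).mp hu1
      rw [hfillval i₁ j k hex1] at hk
      exact absurd h2 (hnoV i₂ j k hr1 x₂ (hk ▸ hembV _))
    · obtain ⟨hu2, hr2⟩ := (hnone i₂ j k).mp h2
      have hex2 : ∃ m : Fin (n - r), σ m i₂ = j := (hσ (i₂, j)).mp hu2
      rw [hfillval i₂ j k hex2] at hk
      exact absurd h1 (hnoV i₁ j k hr2 x₁ (hk ▸ hembV _))
    · rw [hk] at h1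
      exact hC.2.2 i₁ i₂ j k x₂ h1 h2
  · intro i j k x h
    show (C i j k).getD (fill i j k) = x
    rw [h]
    rfl
  · intro i j k h
    have hu := ((hnone i j k).mp h).1
    have hex : ∃ m : Fin (n - r), σ m i = j := (hσ (i, j)).mp hu
    show (C i j k).getD (fill i j k) ∈ V
    rw [h]
    simp only [Option.getD_none]
    rw [hfillval i j k hex]
    exact hembV _
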